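/- If s is a b-shift of f, then for every w, F̂(w) = (-1)^{w·s + b} · F̂(w); hence F̂(w) = 0 whenever w·s ≠ b. -/

import Mathlib

noncomputable def fourierC (n : ℕ) (f : (Fin n → ZMod 2) → ZMod 2) (w : Fin n → ZMod 2) : ℝ :=
  (1 / 2 ^ n : ℝ) * ∑ x : Fin n → ZMod 2, (-1 : ℝ) ^ (((∑ i, w i * x i) + f x).val)

lemma neg_one_pow_add (a b : ZMod 2) :
    (-1 : ℝ) ^ ((a + b).val) = (-1 : ℝ) ^ a.val * (-1 : ℝ) ^ b.val := by
  rw [ZMod.val_add, ← neg_one_pow_eq_pow_mod_two, pow_add]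

theorem bshift_fourier_vanishes (n : ℕ) (f : (Fin n → ZMod 2) → ZMod 2)
    (s : Fin n → ZMod 2) (b : ZMod 2) (hs : ∀ x, f (x + s) = f x + b) :
    ∀ w : Fin n → ZMod 2,
      fourierC n f w = (-1 : ℝ) ^ (((∑ i, w i * s i) + b).val) * fourierC n f w ∧
        ((∑ i, w i * s i) ≠ b → fourierC n f w = 0) := by
  intro w
  have key : fourierC n f w = (-1 : ℝ) ^ (((∑ i, w i * s i) + b).val) * fourierC n f w := by
    unfold fourierC
    have hsum : ∑ x : Fin n → ZMod 2, (-1:ℝ) ^ ((∑ i, w i * x i) + f x).val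
        = (-1:ℝ)^((∑ i, w i * s i) + b).val *
          ∑ x : Fin n → ZMod 2, (-1:ℝ)^((∑ i, w i * x i) + f x).val := by
      rw [Finset.mul_sum]
      rw [← Equiv.sum_comp (Equiv.addRight s) (fun x => (-1 : ℝ) ^ (((∑ i, w i * x i) + f x).val))]
      apply Finset.sum_congr rfl
      intro x _
      simp only [Equiv.coe_addRight]
      have harg : (∑ i, w i * (x + s) i) + f (x + s)
          = (((∑ i, w i * s i) + b) + ((∑ i, w i * x i) + f x)) := by
        rw [hs]
        simp [Pi.add_apply, mul_add, Finset.sum_add_distrib]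
        ring
      rw [harg, neg_one_pow_add]
    conv_lhs => rw [hsum]
    ring
  refine ⟨key, fun hne => ?_⟩
  have h1 : (∑ i, w i * s i) + b = 1 := by
    have : ∀ a c : ZMod 2, a ≠ c → a + c = 1 := by decide
    exact this _ _ hne
  rw [h1] at key
  norm_num [ZMod.val_one] at key
  linarith
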